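/- Let X be a random vector in ℝ^d with E‖X‖² < ∞, and let ω be an MCAR mask with probability vector p ∈ (0,1]^d, independent of X. Then the second-moment matrix of the zero-imputed vector X^NA := X ⊙ ω satisfies E[X^NA (X^NA)ᵀ] = P · E[XXᵀ] · P + P(I_d − P) · diag(E[XXᵀ]). -/

import Mathlib

open MeasureTheory ProbabilityTheory

/-- The second-moment matrix `E[X Xᵀ]` of a random vector, defined entrywise. -/
noncomputable def secondMoment {Ω : Type*} [MeasurableSpace Ω] (μ : Measure Ω) {d : ℕ}
    (X : Ω → Fin d → ℝ) : Matrix (Fin d) (Fin d) ℝ :=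
  Matrix.of fun i j => ∫ a, X a i * X a j ∂μ

/-- **Second moment of a zero-imputed MCAR-masked vector.**
If `X` is a random vector in `ℝ^d` with `E‖X‖² < ∞` and `W` is an MCAR mask with probability
vector `p ∈ (0,1]^d` (coordinates independent, `{0,1}`-valued, `P(W_i = 1) = p_i`),
independent of `X`, then the zero-imputed vector `X ⊙ W` satisfies
`E[(X⊙W)(X⊙W)ᵀ] = P E[XXᵀ] P + P (I - P) diag(E[XXᵀ])` where `P = diag(p)`. -/
theorem secondMoment_hadamard_mcar_mask
    {Ω : Type*} [MeasurableSpace Ω] (μ : Measure Ω) [IsProbabilityMeasure μ]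
    {d : ℕ} (X W : Ω → Fin d → ℝ) (p : Fin d → ℝ)
    (hp : ∀ i, p i ∈ Set.Ioc (0 : ℝ) 1)
    (hXmeas : Measurable X) (hWmeas : Measurable W)
    (hX2 : Integrable (fun a => ∑ i, (X a i) ^ 2) μ)
    (hW01 : ∀ᵐ a ∂μ, ∀ i, W a i = 0 ∨ W a i = 1)
    (hWber : ∀ i, μ {a | W a i = 1} = ENNReal.ofReal (p i))
    (hWiIndep : iIndepFun (fun i a => W a i) μ)
    (hIndep : IndepFun W X μ) :
    secondMoment μ (fun a i => X a i * W a i) =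
      Matrix.diagonal p * secondMoment μ X * Matrix.diagonal p
        + Matrix.diagonal p * (1 - Matrix.diagonal p)
            * Matrix.diagonal (fun i => secondMoment μ X i i) := by
  have hXi : ∀ i, Measurable fun a => X a i := fun i => (measurable_pi_apply i).comp hXmeas
  have hWi : ∀ i, Measurable fun a => W a i := fun i => (measurable_pi_apply i).comp hWmeas
  -- E[W_i] = p_i
  have hWint : ∀ i, ∫ a, W a i ∂μ = p i := by
    intro i
    have hs : MeasurableSet {a | W a i = 1} := (hWi i) (measurableSet_singleton 1)
    have h1 : ∫ a, W a i ∂μ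
        = ∫ a, Set.indicator {a | W a i = 1} (fun _ => (1 : ℝ)) a ∂μ := by
      refine integral_congr_ae ?_
      filter_upwards [hW01] with a ha
      rcases ha i with h0 | h1
      · simp [Set.indicator_apply, Set.mem_setOf_eq, h0]
      · simp [Set.indicator_apply, Set.mem_setOf_eq, h1]
    rw [h1, integral_indicator_const _ hs, measureReal_def, hWber i, smul_eq_mul, mul_one,
      ENNReal.toReal_ofReal (hp i).1.le]
  -- E[W_i W_j]
  have hWWint : ∀ i j, ∫ a, W a i * W a j ∂μ = if i = j then p i else p i * p j := by
    intro i j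
    by_cases hij : i = j
    · subst hij
      simp only [if_pos rfl]
      rw [← hWint i]
      refine integral_congr_ae ?_
      filter_upwards [hW01] with a ha
      rcases ha i with h | h <;> simp [h]
    · rw [if_neg hij]
      have hind : IndepFun (fun a => W a i) (fun a => W a j) μ :=
        hWiIndep.indepFun hij
      rw [hind.integral_fun_mul_eq_mul_integral (hWi i).aestronglyMeasurable (hWi j).aestronglyMeasurable,
        hWint i, hWint j]
  -- key: E[(X_i W_i)(X_j W_j)] = E[X_i X_j] * E[W_i W_j]
  have hkey : ∀ i j, ∫ a, (X a i * W a i) * (X a j * W a j) ∂μ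
      = (∫ a, X a i * X a j ∂μ) * (∫ a, W a i * W a j ∂μ) := by
    intro i j
    have hφ : Measurable fun v : Fin d → ℝ => v i * v j :=
      (measurable_pi_apply i).mul (measurable_pi_apply j)
    have hind : IndepFun (fun a => X a i * X a j) (fun a => W a i * W a j) μ :=
      (hIndep.symm.comp hφ hφ : IndepFun _ _ μ)
    have h1 : ∫ a, (X a i * W a i) * (X a j * W a j) ∂μ
        = ∫ a, (X a i * X a j) * (W a i * W a j) ∂μ := by
      refine integral_congr_ae (Filter.Eventually.of_forall fun a => ?_)
      ring
    rw [h1, hind.integral_fun_mul_eq_mul_integral (((hXi i).mul (hXi j)).aestronglyMeasurable)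
      (((hWi i).mul (hWi j)).aestronglyMeasurable)]
  ext i j
  have hRHS :
      (Matrix.diagonal p * secondMoment μ X * Matrix.diagonal p
        + Matrix.diagonal p * (1 - Matrix.diagonal p)
            * Matrix.diagonal (fun i => secondMoment μ X i i)) i j
      = p i * secondMoment μ X i j * p j
        + (if i = j then p i * (1 - p i) * secondMoment μ X i i else 0) := by
    rw [← Matrix.diagonal_one, Matrix.diagonal_sub, Matrix.diagonal_mul_diagonal,
      Matrix.diagonal_mul_diagonal]
    simp [Matrix.add_apply, Matrix.diagonal_mul, Matrix.mul_diagonal,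
      Matrix.diagonal_apply]
  rw [hRHS]
  show (∫ a, (X a i * W a i) * (X a j * W a j) ∂μ) = _
  rw [hkey i j, hWWint i j]
  by_cases hij : i = j
  · subst hij
    simp only [if_pos rfl]
    show (∫ a, X a i * X a i ∂μ) * p i
      = p i * secondMoment μ X i i * p i + p i * (1 - p i) * secondMoment μ X i i
    simp only [secondMoment, Matrix.of_apply]
    ring
  · simp only [if_neg hij]
    show (∫ a, X a i * X a j ∂μ) * (p i * p j)
      = p i * secondMoment μ X i j * p j + 0
    simp only [secondMoment, Matrix.of_apply]
    ring
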